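/- Let Ω be a real locally convex topological vector space with its Borel σ-algebra, A ⊆ Ω a convex set, and Δ ⊆ A. Suppose that every point x ∈ A is the barycenter of some Borel probability measure ν on Ω with ν(Δ) = 1, in the sense that every continuous linear functional l : Ω → ℝ is ν-integrable and l(x) = ∫ l dν. Then A is contained in the closed convex hull of Δ: A ⊆ closure(convexHull(Δ)). -/

import Mathlib

open MeasureTheory

theorem stmt_12
    {Ω : Type*} [AddCommGroup Ω] [Module ℝ Ω] [TopologicalSpace Ω]
    [IsTopologicalAddGroup Ω] [ContinuousSMul ℝ Ω] [LocallyConvexSpace ℝ Ω]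
    [MeasurableSpace Ω] [BorelSpace Ω]
    (A Δ : Set Ω) (hAconv : Convex ℝ A) (hΔA : Δ ⊆ A)
    (hbary : ∀ x ∈ A, ∃ ν : Measure Ω, IsProbabilityMeasure ν ∧ ν Δ = 1 ∧
      ∀ l : Ω →L[ℝ] ℝ, Integrable (fun y => l y) ν ∧ l x = ∫ y, l y ∂ν) :
    A ⊆ closure (convexHull ℝ Δ) := by
  intro x hx
  by_contra hxC
  set C := closure (convexHull ℝ Δ) with hC
  have hCclosed : IsClosed C := isClosed_closure
  have hCconv : Convex ℝ C := (convex_convexHull ℝ Δ).closure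
  obtain ⟨l, u, hlx, hlC⟩ := geometric_hahn_banach_point_closed hCconv hCclosed hxC
  obtain ⟨ν, hνprob, hνΔ, hνl⟩ := hbary x hx
  obtain ⟨hint, heq⟩ := hνl l
  have hνC : ν C = 1 := by
    refine le_antisymm prob_le_one ?_
    rw [← hνΔ]
    exact measure_mono ((subset_convexHull ℝ Δ).trans subset_closure)
  have hνCc : ν Cᶜ = 0 := by
    have := measure_compl hCclosed.measurableSet (by simp : ν C ≠ ⊤)
    simp [hνC] at this ⊢
    rw [this]
  have hae : ∀ᵐ y ∂ν, u ≤ l y := by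
    refine measure_mono_null (fun y hy => ?_) hνCc
    simp only [Set.mem_compl_iff]
    intro hyC
    exact hy (le_of_lt (hlC y hyC))
  have hconst : Integrable (fun _ : Ω => u) ν := integrable_const u
  have : u ≤ ∫ y, l y ∂ν := by
    have := integral_mono_ae hconst hint hae
    simpa using this
  rw [← heq] at this
  exact absurd hlx (not_lt.mpr this)
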